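/- Let β ≥ 2 be an integer and define u(z) = (1−|z|²)^{2β−1}/|1−z|^{2β} for z ∈ 𝔻. Then for every r ∈ [0,1) one has the exact formula (1/(2π)) ∫₀^{2π} u(r e^{iθ}) dθ = Σ_{k=0}^{2β−2} ( Σ_{j=0}^{k} (−1)^j · C(2β−1, j) · C(k−j+β−1, β−1)² ) · r^{2k}. In particular the integral means of u are a polynomial in r² of degree at most 2β−2. -/

import Mathlib

set_option maxHeartbeats 1000000

open Real Finset Polynomial fwdDiff fwdDiff_aux


lemma fwdDiff_iter_zero_fun (n : ℕ) : (fwdDiff (1:ℝ))^[n] (0 : ℝ → ℝ) = 0 := by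
  rw [← coe_fwdDiffₗ_pow]
  exact map_zero _

lemma fwdDiff_poly_eval (P : ℝ[X]) (n : ℕ) (hP : P.natDegree < n) :
    (fwdDiff (1:ℝ))^[n] (fun x : ℝ => P.eval x) = 0 := by
  induction n generalizing P with
  | zero => omega
  | succ n ih =>
    rw [Function.iterate_succ, Function.comp]
    rcases Nat.eq_zero_or_pos P.natDegree with h0 | h0
    · have hz : Δ_[(1:ℝ)] (fun x : ℝ => P.eval x) = (0 : ℝ → ℝ) := by
        obtain ⟨c, rfl⟩ := Polynomial.natDegree_eq_zero.mp h0
        funext x; simp [fwdDiff]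
      rw [hz, fwdDiff_iter_zero_fun]
    · set Q := Polynomial.taylor 1 P - P with hQ
      have hev : Δ_[(1:ℝ)] (fun x : ℝ => P.eval x) = fun x : ℝ => Q.eval x := by
        funext x
        simp [fwdDiff, hQ, Polynomial.taylor_eval]
      have hcoeff : (Polynomial.taylor 1 P).coeff P.natDegree = P.coeff P.natDegree := by
        rw [Polynomial.taylor_coeff]
        have hd : (Polynomial.hasseDeriv P.natDegree P).natDegree = 0 := by
          have := Polynomial.natDegree_hasseDeriv P P.natDegree
          omega
        obtain ⟨c, hc⟩ := Polynomial.natDegree_eq_zero.mp hd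
        have hc0 : c = P.coeff P.natDegree := by
          have := Polynomial.hasseDeriv_coeff P.natDegree P 0
          rw [← hc] at this
          simpa using this
        rw [← hc, hc0]; simp
      have hdeg : Q.natDegree < P.natDegree := by
        have hQle : Q.degree < (P.natDegree : WithBot ℕ) := by
          apply Polynomial.degree_lt_iff_coeff_zero _ _ |>.2
          intro m hm
          rw [hQ, Polynomial.coeff_sub]
          rcases eq_or_lt_of_le hm with rfl | hlt
          · rw [hcoeff, sub_self]
          · rw [Polynomial.coeff_eq_zero_of_natDegree_lt (by rwa [Polynomial.natDegree_taylor]),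
              Polynomial.coeff_eq_zero_of_natDegree_lt hlt, sub_self]
        rcases eq_or_ne Q 0 with h | h
        · rw [h]; simpa using h0
        · exact (Polynomial.natDegree_lt_iff_degree_lt h).2 hQle
      rw [hev]
      exact ih Q (by omega)

lemma exists_choose_poly (s : ℕ) : ∃ P : ℝ[X], P.natDegree ≤ s ∧
    ∀ m : ℕ, P.eval (m:ℝ) = ((m + s).choose s : ℝ) := by
  refine ⟨Polynomial.C ((s.factorial : ℝ)⁻¹) * (ascPochhammer ℝ s).comp (X + Polynomial.C 1),
    ?_, ?_⟩
  · refine le_trans (Polynomial.natDegree_mul_le) ?_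
    have h1 : (X + (1:ℝ[X])).natDegree = 1 := by
      simpa using Polynomial.natDegree_X_add_C (1:ℝ)
    simp [Polynomial.natDegree_comp, ascPochhammer_natDegree, h1]
  · intro m
    have h1 : ((ascPochhammer ℝ s).comp (X + Polynomial.C 1)).eval (m:ℝ)
        = (ascPochhammer ℝ s).eval ((m+1:ℕ):ℝ) := by
      simp [Polynomial.eval_comp]
    have h2 : (ascPochhammer ℝ s).eval ((m+1:ℕ):ℝ) = ((m+1).ascFactorial s : ℝ) := by
      rw [← ascPochhammer_eval_cast, ascPochhammer_nat_eq_ascFactorial]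
    rw [Polynomial.eval_mul, Polynomial.eval_C, h1, h2,
      Nat.ascFactorial_eq_factorial_mul_choose]
    push_cast
    field_simp

lemma vanish_coeff (β : ℕ) (hβ : 2 ≤ β) (k : ℕ) (hk : 2 * β - 1 ≤ k) :
    (∑ j ∈ Finset.range (k + 1),
      (-1 : ℝ) ^ j * ((2 * β - 1).choose j : ℝ) *
        ((k - j + β - 1).choose (β - 1) : ℝ) ^ 2) = 0 := by
  set s := β - 1 with hs
  set N := 2 * β - 1 with hN
  obtain ⟨P, hPdeg, hPev⟩ := exists_choose_poly s
  -- the sum over range (k+1) equals sum over range (N+1)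
  have hstep1 : (∑ j ∈ Finset.range (k + 1),
      (-1 : ℝ) ^ j * (N.choose j : ℝ) * ((k - j + β - 1).choose (β - 1) : ℝ) ^ 2)
      = ∑ j ∈ Finset.range (N + 1),
      (-1 : ℝ) ^ j * (N.choose j : ℝ) * ((k - j + β - 1).choose (β - 1) : ℝ) ^ 2 := by
    rw [eq_comm]
    apply Finset.sum_subset
    · exact Finset.range_subset_range.2 (by omega)
    · intro j hj hj2
      simp only [Finset.mem_range] at hj hj2
      rw [Nat.choose_eq_zero_of_lt (by omega)]
      simp
  have hzero : (fwdDiff (1:ℝ))^[N] (fun x : ℝ => (P^2).eval x) = 0 :=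
    fwdDiff_poly_eval _ _ (by
      have := Polynomial.natDegree_pow P 2
      omega)
  have hshift := fwdDiff_iter_eq_sum_shift (1:ℝ) (fun x : ℝ => (P^2).eval x) N ((k : ℝ) - N)
  rw [hzero] at hshift
  have hrefl := Finset.sum_range_reflect
    (fun i => ((-1 : ℤ) ^ (N - i) * (N.choose i : ℤ)) •
      (P^2).eval ((k : ℝ) - N + i • (1:ℝ))) (N+1)
  simp only [Pi.zero_apply] at hshift
  rw [← hrefl] at hshift
  rw [hstep1, hshift]
  apply Finset.sum_congr rfl
  intro j hj
  simp only [Finset.mem_range] at hj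
  have hjN : j ≤ N := by omega
  have hjk : j ≤ k := by omega
  have e1 : N + 1 - 1 - j = N - j := by omega
  have e2 : N - (N - j) = j := by omega
  have e3 : N.choose (N - j) = N.choose j := Nat.choose_symm hjN
  have e4 : ((k:ℝ) - (N:ℝ) + (N - j : ℕ) • (1:ℝ)) = ((k - j : ℕ) : ℝ) := by
    rw [nsmul_eq_mul, mul_one, Nat.cast_sub hjN, Nat.cast_sub hjk]
    ring
  rw [e1, e2, e3, e4]
  have e5 : (P^2).eval ((k - j : ℕ) : ℝ) = ((k - j + β - 1).choose (β - 1) : ℝ) ^ 2 := by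
    rw [Polynomial.eval_pow, hPev]
    have : k - j + s = k - j + β - 1 := by omega
    rw [this, hs]
  rw [e5, zsmul_eq_mul]
  push_cast
  ring

/-- The building block function `u(z) = (1-|z|²)^(2β-1) / |1-z|^(2β)`. -/
noncomputable def bblock (β : ℕ) (z : ℂ) : ℝ :=
  (1 - ‖z‖ ^ 2) ^ (2 * β - 1) / ‖1 - z‖ ^ (2 * β)


lemma integral_exp_int (d : ℤ) :
    ∫ θ in (0:ℝ)..(2*π), Complex.exp ((d:ℂ) * θ * Complex.I)
      = if d = 0 then ((2*π : ℝ) : ℂ) else 0 := by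
  rcases eq_or_ne d 0 with rfl | hd
  · simp
  · rw [if_neg hd]
    have hc : (d:ℂ) * Complex.I ≠ 0 := by
      simp [Complex.I_ne_zero, Complex.ext_iff, hd]
    have h : ∀ θ : ℝ, Complex.exp ((d:ℂ) * θ * Complex.I)
        = Complex.exp (((d:ℂ) * Complex.I) * θ) := by
      intro θ; ring_nf
    simp only [h]
    rw [integral_exp_mul_complex hc]
    have h1 : ((d:ℂ) * Complex.I) * ((2*π : ℝ):ℂ) = (d:ℤ) * (2 * π * Complex.I) := by
      push_cast; ring
    rw [h1, Complex.exp_int_mul_two_pi_mul_I]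
    simp

noncomputable def zf (r θ : ℝ) : ℂ := (r:ℂ) * Complex.exp ((θ:ℂ) * Complex.I)

noncomputable def af (s n : ℕ) : ℝ := ((n + s).choose s : ℝ)

noncomputable def cf (s : ℕ) (r : ℝ) (p : ℕ × ℕ) : ℝ := af s p.1 * af s p.2 * r^(p.1 + p.2)

noncomputable def Ff (s : ℕ) (r : ℝ) (p : ℕ × ℕ) (θ : ℝ) : ℂ :=
  ((cf s r p : ℝ) : ℂ) * Complex.exp ((((p.1:ℤ) - (p.2:ℤ) : ℤ) : ℂ) * (θ:ℂ) * Complex.I)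

section main
variable {s : ℕ} {r : ℝ}

lemma hzabs (h0 : 0 ≤ r) (θ : ℝ) : ‖zf r θ‖ = r := by
  rw [zf]
  simp [Complex.norm_exp_ofReal_mul_I, abs_of_nonneg h0]

lemma hznorm (h0 : 0 ≤ r) (h1 : r < 1) (θ : ℝ) : ‖zf r θ‖ < 1 := by
  rw [hzabs h0]; exact h1

lemma hb (h0 : 0 ≤ r) (h1 : r < 1) : Summable (fun n => af s n * r^n) :=
  summable_choose_mul_geometric_of_norm_lt_one s
    (by rwa [Real.norm_eq_abs, abs_of_nonneg h0])

lemma hbnn (h0 : 0 ≤ r) (n : ℕ) : 0 ≤ af s n * r^n := by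
  unfold af; positivity

lemma hA (h0 : 0 ≤ r) (h1 : r < 1) (θ : ℝ) :
    HasSum (fun n => ((n + s).choose s : ℂ) * (zf r θ)^n) (1/(1 - zf r θ)^(s+1)) :=
  hasSum_choose_mul_geometric_of_norm_lt_one s (hznorm h0 h1 θ)

lemma hAconj (h0 : 0 ≤ r) (h1 : r < 1) (θ : ℝ) :
    HasSum (fun n => (starRingEnd ℂ) (((n + s).choose s : ℂ) * (zf r θ)^n))
      ((starRingEnd ℂ) (1/(1 - zf r θ)^(s+1))) :=
  (hA h0 h1 θ).map (starRingEnd ℂ) continuous_star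

lemma hnormA (h0 : 0 ≤ r) (h1 : r < 1) (θ : ℝ) :
    Summable (fun n => ‖((n + s).choose s : ℂ) * (zf r θ)^n‖) := by
  refine (hb (s := s) h0 h1).congr (fun n => ?_)
  rw [norm_mul, norm_pow, hzabs h0,
    Complex.norm_natCast, af]

lemma hnormAconj (h0 : 0 ≤ r) (h1 : r < 1) (θ : ℝ) :
    Summable (fun n => ‖(starRingEnd ℂ) (((n + s).choose s : ℂ) * (zf r θ)^n)‖) := by
  refine (hnormA (s := s) h0 h1 θ).congr (fun n => ?_)
  rw [RCLike.norm_conj]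

lemma hprod (h0 : 0 ≤ r) (h1 : r < 1) (θ : ℝ) :
    HasSum (fun p : ℕ × ℕ =>
      (((p.1 + s).choose s : ℂ) * (zf r θ)^p.1) *
        (starRingEnd ℂ) (((p.2 + s).choose s : ℂ) * (zf r θ)^p.2))
      ((1/(1 - zf r θ)^(s+1)) * (starRingEnd ℂ) (1/(1 - zf r θ)^(s+1))) := by
  obtain ⟨u, hu⟩ := summable_mul_of_summable_norm (hnormA (s := s) h0 h1 θ) (hnormAconj (s := s) h0 h1 θ)
  rwa [(hA h0 h1 θ).mul_eq (hAconj h0 h1 θ) hu]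

lemma hterm (θ : ℝ) (p : ℕ × ℕ) :
    (((p.1 + s).choose s : ℂ) * (zf r θ)^p.1) *
      (starRingEnd ℂ) (((p.2 + s).choose s : ℂ) * (zf r θ)^p.2) = Ff s r p θ := by
  obtain ⟨n, m⟩ := p
  have hzc : (starRingEnd ℂ) ((r:ℂ) * Complex.exp ((θ:ℂ) * Complex.I))
      = (r:ℂ) * Complex.exp (-((θ:ℂ) * Complex.I)) := by
    rw [map_mul, ← Complex.exp_conj, Complex.conj_ofReal, map_mul, Complex.conj_ofReal,
      Complex.conj_I]
    ring_nf
  have hexp : Complex.exp ((n:ℂ) * ((θ:ℂ) * Complex.I)) *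
      Complex.exp ((m:ℂ) * -((θ:ℂ) * Complex.I))
      = Complex.exp ((((n:ℤ) - (m:ℤ) : ℤ) : ℂ) * (θ:ℂ) * Complex.I) := by
    rw [← Complex.exp_add]
    congr 1
    push_cast
    ring
  simp only [Ff, zf, cf, af, map_mul, map_natCast, map_pow, hzc]
  rw [mul_pow, mul_pow, ← Complex.exp_nat_mul, ← Complex.exp_nat_mul, ← hexp]
  push_cast
  ring

lemma hpoint (h0 : 0 ≤ r) (h1 : r < 1) (θ : ℝ) : ((bblock (s+1) (zf r θ) : ℝ) : ℂ)
    = (((1 - r^2)^(2*s+1) : ℝ) : ℂ) * ∑' p : ℕ × ℕ, Ff s r p θ := by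
  have hw : ((1 - zf r θ)^(s+1)) * (starRingEnd ℂ) ((1 - zf r θ)^(s+1))
      = ((‖1 - zf r θ‖ ^ (2*(s+1)) : ℝ) : ℂ) := by
    rw [map_pow, ← mul_pow, Complex.mul_conj, ← Complex.sq_norm]
    push_cast
    rw [← pow_mul, mul_comm 2 (s+1)]
  have h4 : ∑' p : ℕ × ℕ, Ff s r p θ
      = (1/(1 - zf r θ)^(s+1)) * (starRingEnd ℂ) (1/(1 - zf r θ)^(s+1)) := by
    rw [← (hprod h0 h1 θ).tsum_eq]
    exact tsum_congr (fun p => (hterm θ p).symm)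
  have h3 : (1/(1 - zf r θ)^(s+1)) * (starRingEnd ℂ) (1/(1 - zf r θ)^(s+1))
      = 1 / ((‖1 - zf r θ‖ ^ (2*(s+1)) : ℝ) : ℂ) := by
    rw [map_div₀, map_one, div_mul_div_comm, one_mul, hw]
  rw [h4, h3, bblock, hzabs h0]
  have he : 2*(s+1) - 1 = 2*s+1 := by omega
  rw [he]
  push_cast
  rw [div_eq_mul_one_div]

end main

section integrate
variable {s : ℕ} {r : ℝ}

lemma hFcont (p : ℕ × ℕ) : Continuous (Ff s r p) := by
  unfold Ff
  refine continuous_const.mul (Complex.continuous_exp.comp ?_)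
  continuity

lemma hcnn (h0 : 0 ≤ r) (p : ℕ × ℕ) : 0 ≤ cf s r p := by
  unfold cf af
  positivity

lemma hnormFf (p : ℕ × ℕ) (θ : ℝ) : ‖Ff s r p θ‖ = |cf s r p| := by
  unfold Ff
  rw [norm_mul, Complex.norm_real, Complex.norm_exp]
  have : ((((p.1:ℤ) - (p.2:ℤ) : ℤ) : ℂ) * (θ:ℂ) * Complex.I).re = 0 := by
    simp [Complex.mul_re, Complex.mul_im]
  rw [this, Real.exp_zero, mul_one, Real.norm_eq_abs]

lemma hcsum (h0 : 0 ≤ r) (h1 : r < 1) : Summable (cf s r) := by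
  refine (Summable.mul_of_nonneg (hb (s := s) h0 h1) (hb (s := s) h0 h1)
    (fun n => hbnn h0 n) (fun n => hbnn h0 n)).congr (fun p => ?_)
  unfold cf
  rw [pow_add]
  ring

lemma hIp (h0 : 0 ≤ r) (p : ℕ × ℕ) : (∫ θ in (0:ℝ)..(2*π), Ff s r p θ)
    = if p.2 = p.1 then ((2*π * (af s p.1)^2 * (r^2)^p.1 : ℝ) : ℂ) else 0 := by
  obtain ⟨n, m⟩ := p
  unfold Ff
  rw [intervalIntegral.integral_const_mul, integral_exp_int]
  rcases eq_or_ne m n with rfl | hmn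
  · rw [if_pos rfl, if_pos (by omega), cf, af]
    push_cast
    ring
  · rw [if_neg (show ¬((n:ℤ) - (m:ℤ) = 0) by omega), mul_zero,
      if_neg (by simpa using hmn)]

end integrate

lemma mean_value (s : ℕ) (r : ℝ) (h0 : 0 ≤ r) (h1 : r < 1) :
    ∫ θ in (0:ℝ)..(2*π), bblock (s+1) (zf r θ)
      = (1 - r^2)^(2*s+1) *
        (2*π * ∑' n : ℕ, (af s n)^2 * (r^2)^n) := by
  have h2π : (0:ℝ) ≤ 2*π := by positivity
  have hmeas : ∀ p : ℕ × ℕ, MeasureTheory.AEStronglyMeasurable (Ff s r p)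
      (MeasureTheory.volume.restrict (Set.Ioc (0:ℝ) (2*π))) :=
    fun p => (hFcont p).aestronglyMeasurable
  have hlint : ∑' p : ℕ × ℕ, ∫⁻ θ in Set.Ioc (0:ℝ) (2*π), ‖Ff s r p θ‖₊ ≠ ⊤ := by
    have h1' : ∀ p : ℕ × ℕ, ∫⁻ θ in Set.Ioc (0:ℝ) (2*π), ‖Ff s r p θ‖₊
        = ENNReal.ofReal (cf s r p * (2*π)) := by
      intro p
      have hpt : ∀ θ : ℝ, (‖Ff s r p θ‖₊ : ENNReal) = ENNReal.ofReal (cf s r p) := by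
        intro θ
        rw [← enorm_eq_nnnorm, ← ofReal_norm, hnormFf, abs_of_nonneg (hcnn h0 p)]
      rw [MeasureTheory.lintegral_congr hpt, MeasureTheory.lintegral_const,
        MeasureTheory.Measure.restrict_apply MeasurableSet.univ, Set.univ_inter,
        Real.volume_Ioc, ← ENNReal.ofReal_mul (hcnn h0 p)]
      congr 2
      ring
    simp only [h1']
    rw [← ENNReal.ofReal_tsum_of_nonneg
      (fun p => mul_nonneg (hcnn h0 p) h2π) ((hcsum h0 h1).mul_right _)]
    exact ENNReal.ofReal_ne_top
  have hswap : ∫ θ in (0:ℝ)..(2*π), (∑' p : ℕ × ℕ, Ff s r p θ)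
      = ∑' p : ℕ × ℕ, ∫ θ in (0:ℝ)..(2*π), Ff s r p θ := by
    rw [intervalIntegral.integral_of_le h2π,
      MeasureTheory.integral_tsum hmeas hlint]
    exact tsum_congr fun p => (intervalIntegral.integral_of_le h2π).symm
  have hGsum : Summable (fun p : ℕ × ℕ =>
      if p.2 = p.1 then ((2*π * (af s p.1)^2 * (r^2)^p.1 : ℝ) : ℂ) else 0) := by
    refine Summable.of_norm_bounded
      (g := fun p : ℕ × ℕ => 2*π * ((af s p.1 * r^p.1) * (af s p.2 * r^p.2)))
      (((Summable.mul_of_nonneg (hb (s := s) h0 h1) (hb (s := s) h0 h1)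
        (fun n => hbnn h0 n) (fun n => hbnn h0 n))).mul_left _) (fun p => ?_)
    obtain ⟨n, m⟩ := p
    rcases eq_or_ne m n with rfl | hmn
    · rw [if_pos rfl, Complex.norm_real, Real.norm_eq_abs,
        abs_of_nonneg (by unfold af; positivity)]
      apply le_of_eq
      ring
    · rw [if_neg (by simpa using hmn), norm_zero]
      have : (0:ℝ) ≤ af s n * r^n := hbnn h0 n
      have : (0:ℝ) ≤ af s m * r^m := hbnn h0 m
      positivity
  have hdiag : ∑' p : ℕ × ℕ,
      (if p.2 = p.1 then ((2*π * (af s p.1)^2 * (r^2)^p.1 : ℝ) : ℂ) else 0)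
      = ((2*π * ∑' n : ℕ, (af s n)^2 * (r^2)^n : ℝ) : ℂ) := by
    rw [Summable.tsum_prod' hGsum (fun n => hGsum.prod_factor n)]
    have hinner : ∀ n : ℕ, ∑' m : ℕ,
        (if m = n then ((2*π * (af s n)^2 * (r^2)^n : ℝ) : ℂ) else 0)
        = ((2*π * (af s n)^2 * (r^2)^n : ℝ) : ℂ) :=
      fun n => tsum_ite_eq n _
    rw [tsum_congr hinner, ← Complex.ofReal_tsum]
    congr 1
    rw [← tsum_mul_left]
    refine tsum_congr fun n => by ring
  have hcast : ∫ θ in (0:ℝ)..(2*π), ((bblock (s+1) (zf r θ) : ℝ) : ℂ)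
      = (((1 - r^2)^(2*s+1) * (2*π * ∑' n : ℕ, (af s n)^2 * (r^2)^n) : ℝ) : ℂ) := by
    have := hpoint (s := s) h0 h1
    simp only [this]
    rw [intervalIntegral.integral_const_mul, hswap]
    rw [tsum_congr (hIp h0), hdiag, ← Complex.ofReal_mul]
  have hre : ∫ θ in (0:ℝ)..(2*π), ((bblock (s+1) (zf r θ) : ℝ) : ℂ)
      = ((∫ θ in (0:ℝ)..(2*π), bblock (s+1) (zf r θ) : ℝ) : ℂ) :=
    RCLike.intervalIntegral_ofReal ..
  rw [hre] at hcast
  exact_mod_cast hcast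

theorem stmt2 (β : ℕ) (hβ : 2 ≤ β) (r : ℝ) (hr : r ∈ Set.Ico (0 : ℝ) 1) :
    (1 / (2 * π)) *
        (∫ θ in (0 : ℝ)..(2 * π),
          bblock β ((r : ℂ) * Complex.exp ((θ : ℂ) * Complex.I)))
      = ∑ k ∈ Finset.range (2 * β - 1),
          (∑ j ∈ Finset.range (k + 1),
            (-1 : ℝ) ^ j * (Nat.choose (2 * β - 1) j : ℝ) *
              (Nat.choose (k - j + β - 1) (β - 1) : ℝ) ^ 2) * r ^ (2 * k) := by
  obtain ⟨h0, h1⟩ := hr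
  obtain ⟨s, rfl⟩ : ∃ s, β = s + 1 := ⟨β - 1, by omega⟩
  have hs1 : 1 ≤ s := by omega
  -- the r² variable
  set x : ℝ := r^2 with hx
  have hbs : Summable (fun n => af s n * r^n) := hb h0 h1
  -- A and B sequences
  set A : ℕ → ℝ := fun n => (af s n)^2 * x^n with hA
  set B : ℕ → ℝ := fun j => (-1)^j * ((2*s+1).choose j : ℝ) * x^j with hB
  have hAb : ∀ n, A n = (af s n * r^n)^2 := by
    intro n
    simp only [hA, hx]
    ring
  -- summability of A with norms
  have hT : ∀ n, af s n * r^n ≤ ∑' m, af s m * r^m :=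
    fun n => Summable.le_tsum hbs n (fun m _ => hbnn h0 m)
  have hAsum : Summable A := by
    refine Summable.of_nonneg_of_le (fun n => by rw [hAb]; positivity) (fun n => ?_)
      (hbs.mul_left (∑' m, af s m * r^m))
    rw [hAb, sq]
    exact mul_le_mul_of_nonneg_right (hT n) (hbnn h0 n)
  have hAnorm : Summable (fun n => ‖A n‖) := by
    refine hAsum.congr (fun n => ?_)
    rw [Real.norm_eq_abs, abs_of_nonneg (by rw [hAb]; positivity)]
  -- B has finite support
  have hBzero : ∀ j, j ∉ Finset.range (2*s+2) → B j = 0 := by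
    intro j hj
    rw [Finset.mem_range] at hj
    simp only [hB]
    rw [Nat.choose_eq_zero_of_lt (by omega)]
    simp
  have hBnorm : Summable (fun j => ‖B j‖) := by
    refine summable_of_ne_finset_zero (s := Finset.range (2*s+2)) (fun j hj => ?_)
    rw [hBzero j hj, norm_zero]
  have hBsum : Summable B := hBnorm.of_norm
  -- value of the B sum
  have hBval : ∑' j, B j = (1 - x)^(2*s+1) := by
    rw [tsum_eq_sum hBzero]
    rw [show (1 - x : ℝ) = (-x) + 1 by ring, add_pow]
    refine Finset.sum_congr rfl (fun j hj => ?_)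
    simp only [hB]
    ring
  -- the Cauchy product
  have hcauchy : ((∑' j, B j) * ∑' n, A n)
      = ∑' k, ∑ j ∈ Finset.range (k+1), B j * A (k - j) :=
    tsum_mul_tsum_eq_tsum_sum_range_of_summable_norm hBnorm hAnorm
  -- coefficient form
  have hcoeff : ∀ k, (∑ j ∈ Finset.range (k+1), B j * A (k - j))
      = (∑ j ∈ Finset.range (k+1),
          (-1:ℝ)^j * ((2*s+1).choose j : ℝ) * (af s (k-j))^2) * x^k := by
    intro k
    rw [Finset.sum_mul]
    refine Finset.sum_congr rfl (fun j hj => ?_)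
    rw [Finset.mem_range] at hj
    simp only [hB, hA]
    rw [show x^k = x^j * x^(k-j) by rw [← pow_add]; congr 1; omega]
    ring
  -- vanishing of high coefficients
  have hvan : ∀ k, k ∉ Finset.range (2*s+1) →
      (∑ j ∈ Finset.range (k+1),
          (-1:ℝ)^j * ((2*s+1).choose j : ℝ) * (af s (k-j))^2) * x^k = 0 := by
    intro k hk
    rw [Finset.mem_range, not_lt] at hk
    have hv := vanish_coeff (s+1) (by omega) k (by omega)
    have e1 : 2*(s+1) - 1 = 2*s+1 := by omega
    rw [e1] at hv
    have e2 : ∀ j : ℕ, (k - j + (s+1) - 1) = k - j + s := by intro j; omega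
    simp only [e2, Nat.add_sub_cancel] at hv
    have e3 : (∑ j ∈ Finset.range (k+1),
        (-1:ℝ)^j * ((2*s+1).choose j : ℝ) * (af s (k-j))^2)
        = ∑ j ∈ Finset.range (k + 1),
          (-1 : ℝ) ^ j * ((2 * s + 1).choose j : ℝ) * (((k - j + s).choose s : ℝ)) ^ 2 := by
      refine Finset.sum_congr rfl (fun j hj => ?_)
      rw [af]
    rw [e3, hv, zero_mul]
  -- now compute
  have hm := mean_value s r h0 h1
  simp only [zf] at hm
  rw [hm]
  have hpi : (2*π) ≠ 0 := by positivity
  have lhs_eq : (1 / (2*π)) * ((1 - r^2)^(2*s+1) * (2*π * ∑' n, A n))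
      = (1 - x)^(2*s+1) * ∑' n, A n := by
    rw [hx]
    field_simp
  rw [show (∑' n : ℕ, (af s n)^2 * (r^2)^n) = ∑' n, A n from tsum_congr (fun n => rfl), lhs_eq,
    ← hBval, hcauchy, tsum_congr hcoeff, tsum_eq_sum hvan]
  refine Finset.sum_congr (congr_arg Finset.range (by omega)) (fun k hk => ?_)
  have e6 : ∀ j : ℕ, (k - j + (s+1) - 1) = k - j + s := by intro j; omega
  simp only [e6, Nat.add_sub_cancel]
  rw [show r ^ (2*k) = x^k by rw [hx, ← pow_mul]]
  simp only [show 2*(s+1)-1 = 2*s+1 from by omega, af]
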